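/- For every s > 0 and x ∈ ℝ, the Laplace transform in time of φ(t,x) := (2√t)^{−1}·1{|x| ≤ √t} is given explicitly by s·∫₀^∞ e^{−st}·φ(t,x) dt = √(sπ)·(1 − F(√(2s)·|x|)), where F is the standard normal cumulative distribution function. In particular, x ↦ √(sπ)·(1 − F(√(2s)·|x|)) is a probability density on ℝ: ∫_{−∞}^∞ √(sπ)·(1 − F(√(2s)·|x|)) dx = 1. -/

import Mathlib

open MeasureTheory

noncomputable section

/-- The standard normal cumulative distribution function `F`. -/
def stdNormalCdf (x : ℝ) : ℝ :=
  (Real.sqrt (2 * Real.pi))⁻¹ * ∫ y in Set.Iic x, Real.exp (-(y ^ 2) / 2)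

/-- `φ̂(s,x) = √(sπ) (1 - F(√(2s)|x|))`. -/
def phiHat (s x : ℝ) : ℝ :=
  Real.sqrt (s * Real.pi) * (1 - stdNormalCdf (Real.sqrt (2 * s) * |x|))

/-- The candidate scaling-limit density `φ(t,x) = (2√t)⁻¹ 1{|x| ≤ √t}`,
the density of the uniform distribution on `(-√t, √t)`. -/
def phiDens (t x : ℝ) : ℝ :=
  (2 * Real.sqrt t)⁻¹ * if |x| ≤ Real.sqrt t then 1 else 0

open Set Real Filter Topology in
/-- image of `Ioi a` under squaring, `0 ≤ a`. -/
lemma sq_image_Ioi_aux {a : ℝ} (ha : 0 ≤ a) :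
    (fun u : ℝ => u ^ 2) '' Set.Ioi a = Set.Ioi (a ^ 2) := by
  ext t
  constructor
  · rintro ⟨u, hu, rfl⟩
    have : a < u := hu
    exact pow_lt_pow_left₀ this ha (by norm_num)
  · intro ht
    have ht' : (0:ℝ) ≤ t := le_trans (sq_nonneg a) (le_of_lt ht)
    refine ⟨Real.sqrt t, ?_, Real.sq_sqrt ht'⟩
    have : Real.sqrt (a ^ 2) < Real.sqrt t := Real.sqrt_lt_sqrt (sq_nonneg a) ht
    simpa [Real.sqrt_sq ha] using this

open Set Real Filter Topology in
/-- Key identity: `φ̂(s,x) = s ∫_{|x|}^∞ e^{-s u²} du`. -/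
lemma phiHat_eq (s : ℝ) (hs : 0 < s) (x : ℝ) :
    phiHat s x = s * ∫ u in Set.Ioi |x|, Real.exp (-s * u ^ 2) := by
  have h2s : (0:ℝ) < 2 * s := by linarith
  have hfe : (fun y : ℝ => Real.exp (-(y ^ 2) / 2)) =
      fun y : ℝ => Real.exp (-(1/2 : ℝ) * y ^ 2) := by
    funext y; ring_nf
  have hint : Integrable (fun y : ℝ => Real.exp (-(1/2 : ℝ) * y ^ 2)) :=
    integrable_exp_neg_mul_sq (by norm_num)
  set a : ℝ := Real.sqrt (2 * s) * |x| with ha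
  have htotal : ∫ y : ℝ, Real.exp (-(1/2 : ℝ) * y ^ 2) = Real.sqrt (2 * π) := by
    rw [integral_gaussian, show π / (1/2 : ℝ) = 2 * π by ring]
  have hsplit : (∫ y in Set.Iic a, Real.exp (-(1/2 : ℝ) * y ^ 2)) +
      (∫ y in Set.Ioi a, Real.exp (-(1/2 : ℝ) * y ^ 2)) = Real.sqrt (2 * π) := by
    rw [← htotal, ← compl_Iic]
    exact integral_add_compl measurableSet_Iic hint
  have hcov : (∫ u in Set.Ioi |x|, Real.exp (-(1/2 : ℝ) * (Real.sqrt (2*s) * u) ^ 2)) =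
      (Real.sqrt (2*s))⁻¹ • ∫ y in Set.Ioi (Real.sqrt (2*s) * |x|),
        Real.exp (-(1/2 : ℝ) * y ^ 2) :=
    integral_comp_mul_left_Ioi (fun y => Real.exp (-(1/2 : ℝ) * y ^ 2)) |x|
      (Real.sqrt_pos.mpr h2s)
  have hsq : ∀ u : ℝ, Real.exp (-(1/2 : ℝ) * (Real.sqrt (2*s) * u) ^ 2) =
      Real.exp (-s * u ^ 2) := by
    intro u
    rw [mul_pow, Real.sq_sqrt h2s.le]
    ring_nf
  have hcov' : (∫ u in Set.Ioi |x|, Real.exp (-s * u ^ 2)) =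
      (Real.sqrt (2*s))⁻¹ * ∫ y in Set.Ioi a, Real.exp (-(1/2 : ℝ) * y ^ 2) := by
    rw [ha, ← smul_eq_mul, ← hcov]
    exact setIntegral_congr_fun measurableSet_Ioi fun u _ => (hsq u).symm
  have hs2pos : (0:ℝ) < Real.sqrt (2*s) := Real.sqrt_pos.mpr h2s
  have h2pi : (0:ℝ) < Real.sqrt (2 * π) := Real.sqrt_pos.mpr (by positivity)
  have hIoi : (∫ y in Set.Ioi a, Real.exp (-(1/2 : ℝ) * y ^ 2)) =
      Real.sqrt (2*s) * ∫ u in Set.Ioi |x|, Real.exp (-s * u ^ 2) := by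
    rw [hcov']; field_simp
  unfold phiHat stdNormalCdf
  rw [hfe]
  have hconst : Real.sqrt (s * π) * (Real.sqrt (2 * π))⁻¹ * Real.sqrt (2 * s) = s := by
    rw [← Real.sqrt_inv, ← Real.sqrt_mul (by positivity), ← Real.sqrt_mul (by positivity)]
    rw [show s * π * (2 * π)⁻¹ * (2 * s) = s ^ 2 by
      field_simp [Real.pi_ne_zero]]
    exact Real.sqrt_sq hs.le
  have h1 : (1 : ℝ) - (Real.sqrt (2 * π))⁻¹ * ∫ y in Set.Iic a, Real.exp (-(1/2:ℝ) * y ^ 2)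
      = (Real.sqrt (2 * π))⁻¹ * ∫ y in Set.Ioi a, Real.exp (-(1/2:ℝ) * y ^ 2) := by
    have hc : Real.sqrt (2 * π) ≠ 0 := ne_of_gt h2pi
    have hkey : (Real.sqrt (2 * π))⁻¹ * (∫ y in Set.Iic a, Real.exp (-(1/2:ℝ) * y ^ 2)) +
        (Real.sqrt (2 * π))⁻¹ * (∫ y in Set.Ioi a, Real.exp (-(1/2:ℝ) * y ^ 2)) = 1 := by
      rw [← mul_add, hsplit]
      exact inv_mul_cancel₀ hc
    linarith
  rw [h1, hIoi]
  rw [show Real.sqrt (s * π) * ((Real.sqrt (2 * π))⁻¹ *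
      (Real.sqrt (2 * s) * ∫ u in Set.Ioi |x|, Real.exp (-s * u ^ 2))) =
      (Real.sqrt (s * π) * (Real.sqrt (2 * π))⁻¹ * Real.sqrt (2 * s)) *
      ∫ u in Set.Ioi |x|, Real.exp (-s * u ^ 2) by ring, hconst]

open Set Real Filter Topology in
lemma laplace_eq (s : ℝ) (hs : 0 < s) (x : ℝ) :
    (∫ t in Set.Ioi (0 : ℝ), Real.exp (-s * t) * phiDens t x) =
      ∫ u in Set.Ioi |x|, Real.exp (-s * u ^ 2) := by
  set h : ℝ → ℝ := fun t => Real.exp (-s * t) * (2 * Real.sqrt t)⁻¹ with hh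
  have step1 : (∫ t in Set.Ioi (0 : ℝ), Real.exp (-s * t) * phiDens t x) =
      ∫ t in Set.Ioi (x ^ 2), h t := by
    have hae : (fun t => Real.exp (-s * t) * phiDens t x)
        =ᵐ[volume.restrict (Set.Ioi (0:ℝ))] (Set.Ioi (x ^ 2)).indicator h := by
      have h0 : ∀ᵐ t : ℝ, t ≠ x ^ 2 := by
        rw [ae_iff]
        have he : {t : ℝ | ¬ t ≠ x ^ 2} = {x ^ 2} := by ext t; simp
        rw [he]
        exact measure_singleton _
      have h0' : ∀ᵐ t ∂(volume.restrict (Set.Ioi (0:ℝ))), t ≠ x ^ 2 :=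
        h0.filter_mono (ae_mono Measure.restrict_le_self)
      filter_upwards [h0', ae_restrict_mem measurableSet_Ioi] with t htne ht
      have ht0 : (0:ℝ) < t := ht
      by_cases hcase : x ^ 2 < t
      · have hle : |x| ≤ Real.sqrt t := by
          rw [Real.le_sqrt (abs_nonneg x) ht0.le, sq_abs]
          exact hcase.le
        rw [Set.indicator_of_mem (Set.mem_Ioi.mpr hcase)]
        simp [phiDens, hle, hh]
      · have hlt : t < x ^ 2 := lt_of_le_of_ne (not_lt.mp hcase) htne
        have hgt : Real.sqrt t < |x| := by
          have := Real.sqrt_lt_sqrt ht0.le hlt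
          rwa [Real.sqrt_sq_eq_abs] at this
        rw [Set.indicator_of_notMem (by simpa using not_lt.mpr hlt.le : t ∉ Set.Ioi (x ^ 2))]
        simp [phiDens, not_le.mpr hgt]
    rw [integral_congr_ae hae, setIntegral_indicator measurableSet_Ioi,
      Set.Ioi_inter_Ioi, max_eq_right (sq_nonneg x)]
  have step2 : (∫ t in Set.Ioi (x ^ 2), h t) =
      ∫ u in Set.Ioi |x|, Real.exp (-s * u ^ 2) := by
    have himg : (∫ t in Set.Ioi (x ^ 2), h t) =
        ∫ u in Set.Ioi |x|, |2 * u| • h (u ^ 2) := by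
      rw [← sq_abs x, ← sq_image_Ioi_aux (abs_nonneg x)]
      exact integral_image_eq_integral_abs_deriv_smul measurableSet_Ioi
        (fun u _ => by simpa using (hasDerivAt_pow 2 u).hasDerivWithinAt)
        (fun u hu v hv huv => by
          have hu0 : (0:ℝ) ≤ u := le_trans (abs_nonneg x) (le_of_lt hu)
          have hv0 : (0:ℝ) ≤ v := le_trans (abs_nonneg x) (le_of_lt hv)
          have habs : |u| = |v| := by
            rw [← Real.sqrt_sq_eq_abs, ← Real.sqrt_sq_eq_abs, huv]
          rwa [abs_of_nonneg hu0, abs_of_nonneg hv0] at habs) h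
    rw [himg]
    refine setIntegral_congr_fun measurableSet_Ioi (fun u hu => ?_)
    have hu0 : (0:ℝ) < u := lt_of_le_of_lt (abs_nonneg x) hu
    rw [hh]
    simp only [smul_eq_mul]
    rw [Real.sqrt_sq hu0.le, abs_of_pos (by linarith : (0:ℝ) < 2 * u)]
    field_simp
  rw [step1, step2]

open Set Real Filter Topology in
theorem stmt_19 (s : ℝ) (hs : 0 < s) :
    (∀ x : ℝ,
      s * ∫ t in Set.Ioi (0 : ℝ), Real.exp (-s * t) * phiDens t x = phiHat s x) ∧
    ∫ x : ℝ, phiHat s x = 1 := by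
  set G : ℝ → ℝ := fun r => ∫ u in Set.Ioi r, Real.exp (-s * u ^ 2) with hG
  have hintexp : Integrable (fun u : ℝ => Real.exp (-s * u ^ 2)) :=
    integrable_exp_neg_mul_sq hs
  have part1 : ∀ x : ℝ,
      s * ∫ t in Set.Ioi (0 : ℝ), Real.exp (-s * t) * phiDens t x = phiHat s x := by
    intro x
    rw [laplace_eq s hs x, phiHat_eq s hs x]
  refine ⟨part1, ?_⟩
  have hGderiv : ∀ y : ℝ, HasDerivAt G (-(Real.exp (-s * y ^ 2))) y := by
    intro y
    have hGeq : G = fun y : ℝ =>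
        ((∫ u : ℝ, Real.exp (-s * u ^ 2)) - ∫ u in Set.Iic (0:ℝ), Real.exp (-s * u ^ 2))
          - ∫ u in (0:ℝ)..y, Real.exp (-s * u ^ 2) := by
      funext z
      have h1 : (∫ u in Set.Iic z, Real.exp (-s * u ^ 2)) +
          (∫ u in Set.Ioi z, Real.exp (-s * u ^ 2)) = ∫ u : ℝ, Real.exp (-s * u ^ 2) := by
        rw [← compl_Iic]
        exact integral_add_compl measurableSet_Iic hintexp
      have h2 : ((∫ u in Set.Iic z, Real.exp (-s * u ^ 2)) -
          ∫ u in Set.Iic (0:ℝ), Real.exp (-s * u ^ 2)) =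
          ∫ u in (0:ℝ)..z, Real.exp (-s * u ^ 2) :=
        intervalIntegral.integral_Iic_sub_Iic hintexp.integrableOn hintexp.integrableOn
      simp only [hG]
      linarith
    rw [hGeq]
    have hcontf : Continuous (fun u : ℝ => Real.exp (-s * u ^ 2)) := by continuity
    have hd : HasDerivAt (fun y : ℝ => ∫ u in (0:ℝ)..y, Real.exp (-s * u ^ 2))
        (Real.exp (-s * y ^ 2)) y :=
      intervalIntegral.integral_hasDerivAt_right hintexp.intervalIntegrable
        (hcontf.stronglyMeasurableAtFilter _ _) hcontf.continuousAt
    exact hd.const_sub _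
  have hGcont : Continuous G :=
    continuous_iff_continuousAt.mpr fun y => (hGderiv y).continuousAt
  have hGnonneg : ∀ y : ℝ, 0 ≤ G y := fun y =>
    setIntegral_nonneg measurableSet_Ioi (fun u _ => (Real.exp_pos _).le)
  have hs2 : (0:ℝ) < s / 2 := half_pos hs
  set C2 : ℝ := ∫ u : ℝ, Real.exp (-(s/2) * u ^ 2) with hC2
  have hintexp2 : Integrable (fun u : ℝ => Real.exp (-(s/2) * u ^ 2)) :=
    integrable_exp_neg_mul_sq hs2
  have hGbound : ∀ y : ℝ, 0 ≤ y → G y ≤ Real.exp (-(s/2) * y ^ 2) * C2 := by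
    intro y hy
    have hmono : G y ≤ ∫ u in Set.Ioi y,
        Real.exp (-(s/2) * y ^ 2) * Real.exp (-(s/2) * u ^ 2) := by
      refine setIntegral_mono_on hintexp.integrableOn
        ((hintexp2.const_mul _).integrableOn) measurableSet_Ioi (fun u hu => ?_)
      rw [← Real.exp_add]
      apply Real.exp_le_exp.mpr
      have huy : y < u := hu
      have hyu : y ^ 2 ≤ u ^ 2 := by nlinarith
      have := mul_le_mul_of_nonneg_left hyu hs2.le
      linarith
    calc G y ≤ ∫ u in Set.Ioi y,
          Real.exp (-(s/2) * y ^ 2) * Real.exp (-(s/2) * u ^ 2) := hmono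
      _ = Real.exp (-(s/2) * y ^ 2) * ∫ u in Set.Ioi y, Real.exp (-(s/2) * u ^ 2) :=
          integral_const_mul _ _
      _ ≤ Real.exp (-(s/2) * y ^ 2) * C2 := by
          refine mul_le_mul_of_nonneg_left ?_ (Real.exp_pos _).le
          exact setIntegral_le_integral hintexp2
            (Filter.Eventually.of_forall fun u => (Real.exp_pos _).le)
  have hGint : IntegrableOn G (Set.Ioi (0:ℝ)) := by
    refine Integrable.mono' ((hintexp2.const_mul C2).integrableOn (s := Set.Ioi 0))
      hGcont.aestronglyMeasurable.restrict ?_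
    filter_upwards [ae_restrict_mem measurableSet_Ioi] with y hy
    rw [Real.norm_eq_abs, abs_of_nonneg (hGnonneg y)]
    calc G y ≤ Real.exp (-(s/2) * y ^ 2) * C2 := hGbound y (le_of_lt hy)
      _ = C2 * Real.exp (-(s/2) * y ^ 2) := mul_comm _ _
  have hexp_tend : Tendsto (fun y : ℝ => Real.exp (-s * y ^ 2)) atTop (𝓝 0) := by
    have h1 : Tendsto (fun y : ℝ => -s * y ^ 2) atTop atBot :=
      (tendsto_pow_atTop (by norm_num : (2:ℕ) ≠ 0)).const_mul_atTop_of_neg (by linarith)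
    exact Real.tendsto_exp_atBot.comp h1
  have hU : ∀ a : ℝ, (∫ u in Set.Ioi a, u * Real.exp (-s * u ^ 2)) =
      Real.exp (-s * a ^ 2) / (2 * s) := by
    intro a
    have hderiv : ∀ u ∈ Set.Ici a, HasDerivAt
        (fun u : ℝ => -Real.exp (-s * u ^ 2) / (2 * s)) (u * Real.exp (-s * u ^ 2)) u := by
      intro u _
      have h1 : HasDerivAt (fun u : ℝ => -s * u ^ 2) (-s * (2 * u)) u := by
        simpa using ((hasDerivAt_pow 2 u).const_mul (-s))
      have h2 := (h1.exp).neg.div_const (2 * s)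
      refine h2.congr_deriv ?_
      rw [div_eq_iff (by positivity)]
      ring
    have htend : Tendsto (fun u : ℝ => -Real.exp (-s * u ^ 2) / (2 * s)) atTop (𝓝 0) := by
      have := (hexp_tend.neg).div_const (2 * s)
      simpa using this
    have := integral_Ioi_of_hasDerivAt_of_tendsto' hderiv
      ((integrable_mul_exp_neg_mul_sq hs).integrableOn) htend
    rw [this]
    ring
  have hxG_le : ∀ y : ℝ, 0 < y → y * G y ≤ Real.exp (-s * y ^ 2) / (2 * s) := by
    intro y hy
    have h1 : y * G y = ∫ u in Set.Ioi y, y * Real.exp (-s * u ^ 2) :=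
      (integral_const_mul _ _).symm
    rw [h1, ← hU y]
    refine setIntegral_mono_on ((hintexp.const_mul y).integrableOn)
      ((integrable_mul_exp_neg_mul_sq hs).integrableOn) measurableSet_Ioi (fun u hu => ?_)
    have : y < u := hu
    exact mul_le_mul_of_nonneg_right this.le (Real.exp_pos _).le
  have htendxG : Tendsto (fun y : ℝ => y * G y) atTop (𝓝 0) := by
    have hup : Tendsto (fun y : ℝ => Real.exp (-s * y ^ 2) / (2 * s)) atTop (𝓝 0) := by
      have := hexp_tend.div_const (2 * s)
      simpa using this
    refine tendsto_of_tendsto_of_tendsto_of_le_of_le' tendsto_const_nhds hup ?_ ?_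
    · filter_upwards [eventually_gt_atTop (0:ℝ)] with y hy
      exact mul_nonneg hy.le (hGnonneg y)
    · filter_upwards [eventually_gt_atTop (0:ℝ)] with y hy
      exact hxG_le y hy
  set H : ℝ → ℝ := fun y => y * G y - Real.exp (-s * y ^ 2) / (2 * s) with hHdef
  have hHderiv : ∀ y ∈ Set.Ici (0:ℝ), HasDerivAt H (G y) y := by
    intro y _
    have h1 : HasDerivAt (fun y : ℝ => y * G y)
        (1 * G y + y * -(Real.exp (-s * y ^ 2))) y :=
      (hasDerivAt_id y).mul (hGderiv y)
    have h2' : HasDerivAt (fun y : ℝ => -s * y ^ 2) (-s * (2 * y)) y := by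
      simpa using ((hasDerivAt_pow 2 y).const_mul (-s))
    have h2 := (h2'.exp).div_const (2 * s)
    have h3 := h1.sub h2
    refine h3.congr_deriv ?_
    field_simp [hs.ne']
    ring
  have hHtend : Tendsto H atTop (𝓝 0) := by
    have hup : Tendsto (fun y : ℝ => Real.exp (-s * y ^ 2) / (2 * s)) atTop (𝓝 0) := by
      have := hexp_tend.div_const (2 * s)
      simpa using this
    have h := htendxG.sub hup
    rw [sub_zero] at h
    exact h
  have hGOioi : (∫ y in Set.Ioi (0:ℝ), G y) = 1 / (2 * s) := by
    have := integral_Ioi_of_hasDerivAt_of_tendsto' hHderiv hGint hHtend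
    rw [this, hHdef]
    simp
  have hphi : ∀ x : ℝ, phiHat s x = s * G |x| := fun x => phiHat_eq s hs x
  calc ∫ x : ℝ, phiHat s x = ∫ x : ℝ, s * G |x| := by simp_rw [hphi]
    _ = s * ∫ x : ℝ, G |x| := integral_const_mul _ _
    _ = s * (2 * ∫ y in Set.Ioi (0:ℝ), G y) := by rw [integral_comp_abs]
    _ = 1 := by
        rw [hGOioi]
        field_simp
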